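/- (Corollary 2) Let n, l, d₀ be nonnegative integers, let β be a real number with 0 ≤ β ≤ 1, and let B₀,w (d₀ ≤ w ≤ n) be real numbers with 0 ≤ B₀,w ≤ 2^{−l} · C(n,w) for each w. Then Σ_{u=d₀}^{n} β^{u} (1−β)^{n−u} Σ_{w=d₀}^{u} B₀,w · C(n−w, u−w) ≤ 2^{−l} (1+β)^{n}. -/

import Mathlib

theorem stmt10 (n l d₀ : ℕ) (β : ℝ) (hβ₀ : 0 ≤ β) (hβ₁ : β ≤ 1)
    (B : ℕ → ℝ)
    (hB : ∀ w, d₀ ≤ w → w ≤ n →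
      0 ≤ B w ∧ B w ≤ (2 : ℝ) ^ (-(l : ℤ)) * (n.choose w : ℝ)) :
    ∑ u ∈ Finset.Icc d₀ n, β ^ u * (1 - β) ^ (n - u) *
        ∑ w ∈ Finset.Icc d₀ u, B w * ((n - w).choose (u - w) : ℝ)
      ≤ (2 : ℝ) ^ (-(l : ℤ)) * (1 + β) ^ n := by
  have h2 : (0:ℝ) ≤ (2:ℝ) ^ (-(l:ℤ)) := by positivity
  have h1β : (0:ℝ) ≤ 1 - β := by linarith
  calc ∑ u ∈ Finset.Icc d₀ n, β ^ u * (1 - β) ^ (n - u) *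
        ∑ w ∈ Finset.Icc d₀ u, B w * ((n - w).choose (u - w) : ℝ)
      ≤ ∑ u ∈ Finset.Icc d₀ n, β ^ u * (1 - β) ^ (n - u) *
        ((2:ℝ) ^ (-(l:ℤ)) * ((n.choose u : ℝ) * 2 ^ u)) := by
        apply Finset.sum_le_sum
        intro u hu
        rw [Finset.mem_Icc] at hu
        apply mul_le_mul_of_nonneg_left _ (by positivity)
        calc ∑ w ∈ Finset.Icc d₀ u, B w * ((n - w).choose (u - w) : ℝ)
            ≤ ∑ w ∈ Finset.Icc d₀ u,
              (2:ℝ) ^ (-(l:ℤ)) * ((n.choose u : ℝ) * (u.choose w : ℝ)) := by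
              apply Finset.sum_le_sum
              intro w hw
              rw [Finset.mem_Icc] at hw
              have hwn : w ≤ n := le_trans hw.2 hu.2
              have := (hB w hw.1 hwn).2
              have hid : (n.choose u : ℝ) * (u.choose w : ℝ)
                  = (n.choose w : ℝ) * ((n - w).choose (u - w) : ℝ) := by
                have := Nat.choose_mul (n := n) hw.2
                exact_mod_cast this
              rw [hid, ← mul_assoc]
              exact mul_le_mul_of_nonneg_right this (Nat.cast_nonneg _)
          _ = (2:ℝ) ^ (-(l:ℤ)) * ((n.choose u : ℝ) *
              ∑ w ∈ Finset.Icc d₀ u, (u.choose w : ℝ)) := by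
              rw [← Finset.mul_sum, ← Finset.mul_sum]
          _ ≤ (2:ℝ) ^ (-(l:ℤ)) * ((n.choose u : ℝ) * 2 ^ u) := by
              apply mul_le_mul_of_nonneg_left _ h2
              apply mul_le_mul_of_nonneg_left _ (Nat.cast_nonneg _)
              calc ∑ w ∈ Finset.Icc d₀ u, (u.choose w : ℝ)
                  ≤ ∑ w ∈ Finset.range (u+1), (u.choose w : ℝ) := by
                    apply Finset.sum_le_sum_of_subset_of_nonneg
                    · intro w hw
                      rw [Finset.mem_Icc] at hw
                      exact Finset.mem_range.mpr (Nat.lt_succ_of_le hw.2)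
                    · intro _ _ _; exact Nat.cast_nonneg _
                _ = 2 ^ u := by
                    rw [← Nat.cast_sum, Nat.sum_range_choose]
                    push_cast; ring
    _ = ∑ u ∈ Finset.Icc d₀ n, (2:ℝ) ^ (-(l:ℤ)) *
        ((2*β) ^ u * (1 - β) ^ (n - u) * (n.choose u : ℝ)) := by
        apply Finset.sum_congr rfl
        intro u _
        rw [mul_pow]
        ring
    _ = (2:ℝ) ^ (-(l:ℤ)) * ∑ u ∈ Finset.Icc d₀ n,
        (2*β) ^ u * (1 - β) ^ (n - u) * (n.choose u : ℝ) := by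
        rw [Finset.mul_sum]
    _ ≤ (2:ℝ) ^ (-(l:ℤ)) * ∑ u ∈ Finset.range (n+1),
        (2*β) ^ u * (1 - β) ^ (n - u) * (n.choose u : ℝ) := by
        apply mul_le_mul_of_nonneg_left _ h2
        apply Finset.sum_le_sum_of_subset_of_nonneg
        · intro u hu
          rw [Finset.mem_Icc] at hu
          exact Finset.mem_range.mpr (Nat.lt_succ_of_le hu.2)
        · intro u _ _; positivity
    _ = (2:ℝ) ^ (-(l:ℤ)) * (1 + β) ^ n := by
        rw [← add_pow]
        ring_nf
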